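/- Let (M,g) be a Kähler surface with Kähler form ω and complex structure J, v a vector field, and A : TM → TM a bundle morphism commuting with J and self-adjoint with respect to g at every point. Set ζ = g(JA·,·), α = g(v,·), ξ = g(Jv,·). Then 4 ζ ∧ α ∧ ξ = [(tr_ℝ A)·g(v,v) − 2g(Av,v)]·ω ∧ ω. -/

import Mathlib

open RealInnerProductSpace

/-- The wedge product of two `1`-forms (shuffle convention). -/
def wedge11 {E : Type*} (a b : E → ℝ) (x y : E) : ℝ := a x * b y - a y * b x

/-- The wedge product of two `2`-forms, a `4`-form (shuffle convention). -/
def wedge22 {E : Type*} (s t : E → E → ℝ) (x₁ x₂ x₃ x₄ : E) : ℝ :=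
  s x₁ x₂ * t x₃ x₄ - s x₁ x₃ * t x₂ x₄ + s x₁ x₄ * t x₂ x₃
    + s x₂ x₃ * t x₁ x₄ - s x₂ x₄ * t x₁ x₃ + s x₃ x₄ * t x₁ x₂

set_option maxHeartbeats 2000000

/-- formula (14.2) of the paper. On a Kähler surface `(M,g)`
with Kähler form `ω` and complex structure `J`, for a vector field `v` and a
bundle morphism `A` commuting with `J` and self-adjoint, with
`ζ = g(JA·,·)`, `α = g(v,·)`, `ξ = g(Jv,·)`, one has
`4 ζ ∧ α ∧ ξ = [(tr_ℝ A)·g(v,v) − 2 g(Av,v)]·ω ∧ ω`.  Pointwise formulation on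
the (real `4`-dimensional) tangent space `E`. -/
theorem stmt_14
    {E : Type*} [NormedAddCommGroup E] [InnerProductSpace ℝ E]
    [FiniteDimensional ℝ E] (hdim : Module.finrank ℝ E = 4)
    (J : E →ₗ[ℝ] E) (hJ2 : ∀ x, J (J x) = -x)
    (hJorth : ∀ x y, ⟪J x, J y⟫ = ⟪x, y⟫)
    (A : E →ₗ[ℝ] E) (hAJ : ∀ x, A (J x) = J (A x))
    (hAsa : ∀ x y, ⟪A x, y⟫ = ⟪x, A y⟫)
    (v : E) :
    ∀ x₁ x₂ x₃ x₄ : E,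
      4 * wedge22 (fun x y => ⟪J (A x), y⟫)
          (wedge11 (fun x => ⟪v, x⟫) (fun x => ⟪J v, x⟫)) x₁ x₂ x₃ x₄
        = (LinearMap.trace ℝ E A * ⟪v, v⟫ - 2 * ⟪A v, v⟫) *
            wedge22 (fun x y => ⟪J x, y⟫) (fun x y => ⟪J x, y⟫) x₁ x₂ x₃ x₄ := by
  classical
  -- basic facts about J
  have hskew : ∀ x y : E, ⟪J x, y⟫ = -⟪x, J y⟫ := by
    intro x y
    have h := hJorth x (J y)
    rw [hJ2, inner_neg_right] at h
    linarith
  have hJself : ∀ x : E, ⟪J x, x⟫ = 0 := by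
    intro x
    have h := hskew x x
    have h2 := real_inner_comm x (J x)
    linarith
  -- a unit vector
  have hnt : Nontrivial E := by
    refine Module.nontrivial_of_finrank_pos (R := ℝ) ?_
    rw [hdim]; norm_num
  have hunit : ∀ w : E, w ≠ 0 → ‖(‖w‖⁻¹ • w)‖ = 1 := by
    intro w hw
    rw [norm_smul, norm_inv, norm_norm, inv_mul_cancel₀ (norm_ne_zero_iff.mpr hw)]
  obtain ⟨w, hw⟩ := exists_ne (0 : E)
  obtain ⟨e1, he1⟩ : ∃ y : E, ‖y‖ = 1 := ⟨_, hunit w hw⟩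
  have he1ne : e1 ≠ 0 := by
    intro h; rw [h, norm_zero] at he1; norm_num at he1
  obtain ⟨e2, hJ1⟩ : ∃ y, J e1 = y := ⟨_, rfl⟩
  -- orthogonal complement
  set K : Submodule ℝ E := (ℝ ∙ e1) ⊔ (ℝ ∙ e2) with hKdef
  have he2ne : e2 ≠ 0 := by
    intro h
    have := hJorth e1 e1
    rw [hJ1, h, inner_zero_left] at this
    rw [real_inner_self_eq_norm_mul_norm, he1] at this
    norm_num at this
  have hKle : Module.finrank ℝ K ≤ 2 := by
    refine (Submodule.finrank_add_le_finrank_add_finrank _ _).trans ?_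
    rw [finrank_span_singleton he1ne, finrank_span_singleton he2ne]
  have horth : Module.finrank ℝ K + Module.finrank ℝ Kᗮ = 4 := by
    rw [Submodule.finrank_add_finrank_orthogonal, hdim]
  have hKbot : Kᗮ ≠ ⊥ := by
    intro h
    rw [h, finrank_bot] at horth
    omega
  obtain ⟨w3, hw3K, hw3⟩ := Submodule.exists_mem_ne_zero_of_ne_bot hKbot
  obtain ⟨e3, he3K, he3⟩ : ∃ y : E, y ∈ Kᗮ ∧ ‖y‖ = 1 :=
    ⟨_, Submodule.smul_mem _ _ hw3K, hunit w3 hw3⟩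
  obtain ⟨e4, hJ3⟩ : ∃ y, J e3 = y := ⟨_, rfl⟩
  have hJ2e : J e2 = -e1 := by rw [← hJ1, hJ2]
  have hJ4 : J e4 = -e3 := by rw [← hJ3, hJ2]
  have he1K : e1 ∈ K := Submodule.mem_sup_left (Submodule.mem_span_singleton_self e1)
  have he2K : e2 ∈ K := Submodule.mem_sup_right (Submodule.mem_span_singleton_self e2)
  -- inner product table
  have i11 : ⟪e1, e1⟫ = 1 := by
    rw [real_inner_self_eq_norm_mul_norm, he1]; norm_num
  have i22 : ⟪e2, e2⟫ = 1 := by rw [← hJ1, hJorth, i11]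
  have i33 : ⟪e3, e3⟫ = 1 := by
    rw [real_inner_self_eq_norm_mul_norm, he3]; norm_num
  have i44 : ⟪e4, e4⟫ = 1 := by rw [← hJ3, hJorth, i33]
  have i12 : ⟪e1, e2⟫ = 0 := by
    rw [← hJ1, ← real_inner_comm, hJself]
  have i21 : ⟪e2, e1⟫ = 0 := by rw [real_inner_comm, i12]
  have i13 : ⟪e1, e3⟫ = 0 := Submodule.inner_right_of_mem_orthogonal he1K he3K
  have i31 : ⟪e3, e1⟫ = 0 := by rw [real_inner_comm, i13]
  have i23 : ⟪e2, e3⟫ = 0 := Submodule.inner_right_of_mem_orthogonal he2K he3K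
  have i32 : ⟪e3, e2⟫ = 0 := by rw [real_inner_comm, i23]
  have i14 : ⟪e1, e4⟫ = 0 := by
    have h := hskew e1 e3
    rw [hJ1, hJ3, i23] at h
    linarith
  have i41 : ⟪e4, e1⟫ = 0 := by rw [real_inner_comm, i14]
  have i24 : ⟪e2, e4⟫ = 0 := by rw [← hJ1, ← hJ3, hJorth, i13]
  have i42 : ⟪e4, e2⟫ = 0 := by rw [real_inner_comm, i24]
  have i34 : ⟪e3, e4⟫ = 0 := by rw [← hJ3, ← real_inner_comm, hJself]
  have i43 : ⟪e4, e3⟫ = 0 := by rw [real_inner_comm, i34]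
  -- the orthonormal basis
  set f : Fin 4 → E := ![e1, e2, e3, e4] with hfdef
  have hon : Orthonormal ℝ f := by
    rw [orthonormal_iff_ite]
    intro i j
    fin_cases i <;> fin_cases j <;>
      simp [hfdef, i11, i12, i13, i14, i21, i22, i23, i24, i31, i32, i33, i34,
        i41, i42, i43, i44, he1, he3,
        (show ‖e2‖ = 1 by
          have h := i22; rw [real_inner_self_eq_norm_mul_norm] at h; nlinarith [norm_nonneg e2]),
        (show ‖e4‖ = 1 by
          have h := i44; rw [real_inner_self_eq_norm_mul_norm] at h; nlinarith [norm_nonneg e4])]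
  have hcard : Fintype.card (Fin 4) = Module.finrank ℝ E := by
    rw [hdim]; simp
  have hspan : ⊤ ≤ Submodule.span ℝ (Set.range f) := by
    rw [← coe_basisOfOrthonormalOfCardEqFinrank hon hcard]
    exact (basisOfOrthonormalOfCardEqFinrank hon hcard).span_eq.ge
  set b : OrthonormalBasis (Fin 4) ℝ E := OrthonormalBasis.mk hon hspan with hbdef
  have hb : ∀ i, b i = f i := fun i => by rw [hbdef, OrthonormalBasis.coe_mk]
  have hrep : ∀ x : E, x = ⟪e1, x⟫ • e1 + ⟪e2, x⟫ • e2 + ⟪e3, x⟫ • e3 + ⟪e4, x⟫ • e4 := by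
    intro x
    have h := b.sum_repr' x
    rw [Fin.sum_univ_four, hb 0, hb 1, hb 2, hb 3] at h
    simpa [hfdef] using h.symm
  -- coefficients of A
  obtain ⟨p, hpdef⟩ : ∃ r : ℝ, ⟪e1, A e1⟫ = r := ⟨_, rfl⟩
  obtain ⟨c, hcdef⟩ : ∃ r : ℝ, ⟪e3, A e1⟫ = r := ⟨_, rfl⟩
  obtain ⟨d, hddef⟩ : ∃ r : ℝ, ⟪e4, A e1⟫ = r := ⟨_, rfl⟩
  obtain ⟨q, hqdef⟩ : ∃ r : ℝ, ⟪e3, A e3⟫ = r := ⟨_, rfl⟩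
  have h2A1 : ⟪e2, A e1⟫ = 0 := by
    have h : ⟪e2, A e1⟫ = -⟪e2, A e1⟫ := by
      calc ⟪e2, A e1⟫ = ⟪J e1, A e1⟫ := by rw [hJ1]
        _ = -⟪e1, J (A e1)⟫ := hskew e1 (A e1)
        _ = -⟪e1, A (J e1)⟫ := by rw [hAJ]
        _ = -⟪e1, A e2⟫ := by rw [hJ1]
        _ = -⟪A e1, e2⟫ := by rw [hAsa]
        _ = -⟪e2, A e1⟫ := by rw [real_inner_comm]
    linarith
  have hA1 : A e1 = p • e1 + c • e3 + d • e4 := by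
    have h := hrep (A e1)
    rw [h2A1] at h
    rw [h, hpdef, hcdef, hddef]; module
  have h1A3 : ⟪e1, A e3⟫ = c := by
    rw [← hAsa, real_inner_comm]; exact hcdef
  have h2A3 : ⟪e2, A e3⟫ = -d := by
    calc ⟪e2, A e3⟫ = ⟪J e1, A e3⟫ := by rw [hJ1]
      _ = -⟪e1, J (A e3)⟫ := hskew e1 (A e3)
      _ = -⟪e1, A (J e3)⟫ := by rw [hAJ]
      _ = -⟪e1, A e4⟫ := by rw [hJ3]
      _ = -⟪A e1, e4⟫ := by rw [hAsa]
      _ = -d := by rw [real_inner_comm]; rw [hddef]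
  have h4A3 : ⟪e4, A e3⟫ = 0 := by
    have h : ⟪e4, A e3⟫ = -⟪e4, A e3⟫ := by
      calc ⟪e4, A e3⟫ = ⟪J e3, A e3⟫ := by rw [hJ3]
        _ = -⟪e3, J (A e3)⟫ := hskew e3 (A e3)
        _ = -⟪e3, A (J e3)⟫ := by rw [hAJ]
        _ = -⟪e3, A e4⟫ := by rw [hJ3]
        _ = -⟪A e3, e4⟫ := by rw [hAsa]
        _ = -⟪e4, A e3⟫ := by rw [real_inner_comm]
    linarith
  have hA3 : A e3 = c • e1 - d • e2 + q • e3 := by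
    have h := hrep (A e3)
    rw [h1A3, h2A3, h4A3, hqdef] at h
    rw [h]; module
  have hA2 : A e2 = p • e2 - d • e3 + c • e4 := by
    rw [← hJ1, hAJ, hA1]
    simp only [map_add, map_smul, hJ1, hJ3, hJ4]
    module
  have hA4 : A e4 = d • e1 + c • e2 + q • e4 := by
    rw [← hJ3, hAJ, hA3]
    simp only [map_add, map_sub, map_smul, hJ1, hJ2e, hJ3, hJ4]
    module
  -- the trace of A
  have htr : LinearMap.trace ℝ E A = 2 * p + 2 * q := by
    rw [LinearMap.trace_eq_matrix_trace ℝ b.toBasis A, Matrix.trace,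
      Fin.sum_univ_four]
    have hdiag : ∀ i, Matrix.diag (LinearMap.toMatrix b.toBasis b.toBasis A) i
        = ⟪b i, A (b i)⟫ := by
      intro i
      rw [Matrix.diag_apply, LinearMap.toMatrix_apply,
        OrthonormalBasis.coe_toBasis, OrthonormalBasis.coe_toBasis_repr_apply,
        OrthonormalBasis.repr_apply_apply]
    rw [hdiag 0, hdiag 1, hdiag 2, hdiag 3, hb 0, hb 1, hb 2, hb 3]
    simp only [hfdef, Matrix.cons_val_zero, Matrix.cons_val_one, Matrix.head_cons,
      Matrix.cons_val_two, Matrix.tail_cons, Matrix.cons_val_three]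
    rw [hA1, hA2, hA3, hA4]
    simp only [inner_add_right, inner_sub_right, real_inner_smul_right,
      i11, i12, i13, i14, i21, i22, i23, i24, i31, i32, i33, i34, i41, i42, i43, i44]
    ring
  -- expand v
  obtain ⟨v1, v2, v3, v4, hv⟩ :
      ∃ a₁ a₂ a₃ a₄ : ℝ, v = a₁ • e1 + a₂ • e2 + a₃ • e3 + a₄ • e4 :=
    ⟨_, _, _, _, hrep v⟩
  intro x₁ x₂ x₃ x₄
  obtain ⟨a1, a2, a3, a4, hx1⟩ :
      ∃ c₁ c₂ c₃ c₄ : ℝ, x₁ = c₁ • e1 + c₂ • e2 + c₃ • e3 + c₄ • e4 :=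
    ⟨_, _, _, _, hrep x₁⟩
  obtain ⟨b1, b2, b3, b4, hx2⟩ :
      ∃ c₁ c₂ c₃ c₄ : ℝ, x₂ = c₁ • e1 + c₂ • e2 + c₃ • e3 + c₄ • e4 :=
    ⟨_, _, _, _, hrep x₂⟩
  obtain ⟨g1, g2, g3, g4, hx3⟩ :
      ∃ c₁ c₂ c₃ c₄ : ℝ, x₃ = c₁ • e1 + c₂ • e2 + c₃ • e3 + c₄ • e4 :=
    ⟨_, _, _, _, hrep x₃⟩
  obtain ⟨k1, k2, k3, k4, hx4⟩ :
      ∃ c₁ c₂ c₃ c₄ : ℝ, x₄ = c₁ • e1 + c₂ • e2 + c₃ • e3 + c₄ • e4 :=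
    ⟨_, _, _, _, hrep x₄⟩
  subst hv hx1 hx2 hx3 hx4
  simp only [wedge22, wedge11, htr, map_add, map_sub, map_neg, map_smul, hA1, hA2, hA3, hA4,
    hJ1, hJ2e, hJ3, hJ4, smul_neg, neg_smul, smul_add, smul_sub, smul_smul,
    inner_add_left, inner_add_right, inner_sub_left, inner_sub_right,
    inner_neg_left, inner_neg_right, real_inner_smul_left, real_inner_smul_right,
    i11, i12, i13, i14, i21, i22, i23, i24, i31, i32, i33, i34, i41, i42, i43, i44]
  ring
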